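/- The four-qubit hypergraph state |V₁₈⟩, defined by coefficients c_{i₁i₂i₃i₄} = −1 when i₁ = i₂ = 1 and (i₃,i₄) ≠ (1,1), and c_{i₁i₂i₃i₄} = 1 otherwise, is SLOCC-equivalent to the state |μ⟩ = |0000⟩ + |1100⟩ + |1111⟩. -/
import Mathlib


/-- The four-qubit state `|μ⟩ = |0000⟩ + |1100⟩ + |1111⟩`. -/
noncomputable def muState : Fin 2 × Fin 2 × Fin 2 × Fin 2 → ℂ :=
  fun x => if x = (0, 0, 0, 0) ∨ x = (1, 1, 0, 0) ∨ x = (1, 1, 1, 1) then 1 else 0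

/-- The four-qubit hypergraph state `|V₁₈⟩`: coefficient `-1` when `i₁ = i₂ = 1` and
`(i₃, i₄) ≠ (1, 1)`, and `1` otherwise. -/
noncomputable def V18 : Fin 2 × Fin 2 × Fin 2 × Fin 2 → ℂ :=
  fun x => if x.1 = 1 ∧ x.2.1 = 1 ∧ ¬(x.2.2.1 = 1 ∧ x.2.2.2 = 1) then -1 else 1

/-- `|V₁₈⟩` is SLOCC-equivalent to `|μ⟩ = |0000⟩ + |1100⟩ + |1111⟩`. -/
theorem v18_slocc_equiv_mu :
    ∃ A₁ A₂ A₃ A₄ : Matrix (Fin 2) (Fin 2) ℂ,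
      IsUnit A₁ ∧ IsUnit A₂ ∧ IsUnit A₃ ∧ IsUnit A₄ ∧
      ∀ i j k l : Fin 2,
        muState (i, j, k, l) =
          ∑ a : Fin 2, ∑ b : Fin 2, ∑ c : Fin 2, ∑ d : Fin 2,
            A₁ i a * A₂ j b * A₃ k c * A₄ l d * V18 (a, b, c, d) := by
  refine ⟨!![1, 0; -1, 1], !![1, 0; 1/2, -1/2], !![1, 0; -1, 1], !![1, 0; 1, -1],
    ?_, ?_, ?_, ?_, ?_⟩
  · rw [Matrix.isUnit_iff_isUnit_det]
    simp [Matrix.det_fin_two_of]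
  · rw [Matrix.isUnit_iff_isUnit_det]
    simp [Matrix.det_fin_two_of]
  · rw [Matrix.isUnit_iff_isUnit_det]
    simp [Matrix.det_fin_two_of]
  · rw [Matrix.isUnit_iff_isUnit_det]
    simp [Matrix.det_fin_two_of]
  · intro i j k l
    fin_cases i <;> fin_cases j <;> fin_cases k <;> fin_cases l <;>
      simp [muState, V18, Fin.sum_univ_two, Prod.ext_iff] <;> norm_num
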